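/- Let a group N act on a connected simplicial graph X with minimum displacement at least 8, and suppose x̄, ȳ are vertices of the quotient graph X/N with Lk(x̄) = Lk(ȳ) (equal links in X/N). If in X any two distinct vertices have distinct links, then x̄ = ȳ. -/

import Mathlib

variable {V N : Type*} [Group N] [MulAction N V]

/-- The quotient of a simplicial graph by a group action: vertices are `N`-orbits,
and two distinct orbits are adjacent iff they admit adjacent representatives. -/
def quotGraph (N : Type*) [Group N] [MulAction N V] (G : SimpleGraph V) :
    SimpleGraph (Quotient (MulAction.orbitRel N V)) where
  Adj a b := a ≠ b ∧ ∃ x y : V,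
    Quotient.mk (MulAction.orbitRel N V) x = a ∧
    Quotient.mk (MulAction.orbitRel N V) y = b ∧ G.Adj x y
  symm := by
    constructor
    rintro a b ⟨hne, x, y, hx, hy, hadj⟩
    exact ⟨hne.symm, y, x, hy, hx, hadj.symm⟩
  loopless := by
    constructor
    rintro a ⟨hne, _⟩
    exact hne rfl

private lemma mk_eq_iff {x y : V} :
    Quotient.mk (MulAction.orbitRel N V) x = Quotient.mk (MulAction.orbitRel N V) y ↔
      ∃ n : N, n • y = x := by
  rw [Quotient.eq, MulAction.orbitRel_apply]
  exact Iff.rfl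

/-- if `N` acts on a connected simplicial graph `X` with minimum
displacement at least 8, and in `X` distinct vertices have distinct links, then the
same holds in the quotient: vertices of `X/N` with equal links coincide. -/
theorem quotient_link_injective (G : SimpleGraph V) (hconn : G.Connected)
    (hact : ∀ (n : N) (x y : V), G.Adj x y → G.Adj (n • x) (n • y))
    (hdisp : ∀ n : N, n ≠ 1 → ∀ x : V, 8 ≤ G.dist x (n • x))
    (hlink : ∀ x y : V, x ≠ y → G.neighborSet x ≠ G.neighborSet y)
    (a b : Quotient (MulAction.orbitRel N V))
    (h : (quotGraph N G).neighborSet a = (quotGraph N G).neighborSet b) :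
    a = b := by
  classical
  obtain ⟨x, rfl⟩ := a.exists_rep
  obtain ⟨y, rfl⟩ := b.exists_rep
  set mk : V → Quotient (MulAction.orbitRel N V) := Quotient.mk (MulAction.orbitRel N V)
  -- from an adjacency in X, we get an adjacency in the quotient
  have adj_mk : ∀ v u : V, G.Adj v u → (quotGraph N G).Adj (mk v) (mk u) := by
    intro v u hvu
    refine ⟨?_, v, u, rfl, rfl, hvu⟩
    intro hVU
    obtain ⟨n, hn⟩ := mk_eq_iff.mp hVU
    by_cases h1 : n = 1
    · subst h1; rw [one_smul] at hn; exact G.loopless.irrefl u (hn ▸ hvu)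
    · have h8 := hdisp n h1 u
      rw [hn] at h8
      have h1' : G.dist u v ≤ 1 := by
        simpa using SimpleGraph.dist_le (hvu.symm.toWalk)
      omega
  -- from an adjacency in the quotient between classes of v and u,
  -- get an adjacency in X between v and a translate of u
  have adj_extract : ∀ v u : V, (quotGraph N G).Adj (mk v) (mk u) →
      ∃ n : N, G.Adj v (n • u) := by
    rintro v u ⟨-, p, q, hp, hq, hadj⟩
    obtain ⟨k, hk⟩ := mk_eq_iff.mp hp
    obtain ⟨m, hm⟩ := mk_eq_iff.mp hq
    refine ⟨k⁻¹ * m, ?_⟩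
    have := hact k⁻¹ p q hadj
    rw [← hk, ← hm, inv_smul_smul, ← mul_smul] at this
    exact this
  -- a vertex is not in the same orbit as its neighbour, so the distance
  -- argument works; first find a common neighbour.
  have hstep : x = y ∨ ∃ z, G.Adj x z := by
    obtain ⟨w⟩ := hconn.preconnected x y
    cases w with
    | nil => exact Or.inl rfl
    | cons hxz p => exact Or.inr ⟨_, hxz⟩
  rcases hstep with rfl | ⟨z, hxz⟩
  · rfl
  · -- mk z is adjacent to mk x, hence to mk y
    have h1 : (quotGraph N G).Adj (mk y) (mk z) := by
      have : mk z ∈ (quotGraph N G).neighborSet (mk x) := (adj_mk x z hxz)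
      rw [h] at this
      exact this
    obtain ⟨n0, hyz0⟩ := adj_extract y z h1
    -- replace y by y₂ := n0⁻¹ • y, a representative of the same orbit adjacent to z
    set y₂ : V := n0⁻¹ • y with hy₂
    have hy₂mk : mk y₂ = mk y := mk_eq_iff.mpr ⟨n0⁻¹, rfl⟩
    have hy₂z : G.Adj y₂ z := by
      have := hact n0⁻¹ y (n0 • z) hyz0
      rwa [inv_smul_smul] at this
    -- key: if u is adjacent to x and n • u adjacent to y₂ (or vice versa) then n = 1
    have dist4 : ∀ (u : V) (n : N), G.Adj x u → G.Adj y₂ (n • u) → n = 1 := by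
      intro u n hxu hyn
      by_contra h1'
      have h8 := hdisp n h1' u
      have hle : G.dist u (n • u) ≤ 4 := by
        have hw := SimpleGraph.dist_le
          ((hxu.symm.toWalk.append hxz.toWalk).append (hy₂z.symm.toWalk.append hyn.toWalk))
        simp only [SimpleGraph.Walk.length_append, SimpleGraph.Walk.length_cons,
          SimpleGraph.Walk.length_nil] at hw
        omega
      omega
    have dist4' : ∀ (u : V) (n : N), G.Adj y₂ u → G.Adj x (n • u) → n = 1 := by
      intro u n hyu hxn
      by_contra h1'
      have h8 := hdisp n h1' u
      have hle : G.dist u (n • u) ≤ 4 := by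
        have hw := SimpleGraph.dist_le
          ((hyu.symm.toWalk.append hy₂z.toWalk).append (hxz.symm.toWalk.append hxn.toWalk))
        simp only [SimpleGraph.Walk.length_append, SimpleGraph.Walk.length_cons,
          SimpleGraph.Walk.length_nil] at hw
        omega
      omega
    -- show neighborSet x = neighborSet y₂
    have hset : G.neighborSet x = G.neighborSet y₂ := by
      ext u
      constructor
      · intro (hxu : G.Adj x u)
        have hq : (quotGraph N G).Adj (mk y) (mk u) := by
          have : mk u ∈ (quotGraph N G).neighborSet (mk x) := adj_mk x u hxu
          rw [h] at this; exact this
        rw [← hy₂mk] at hq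
        obtain ⟨n, hn⟩ := adj_extract y₂ u hq
        have := dist4 u n hxu hn
        subst this
        rw [one_smul] at hn
        exact hn
      · intro (hyu : G.Adj y₂ u)
        have hq : (quotGraph N G).Adj (mk x) (mk u) := by
          have : mk u ∈ (quotGraph N G).neighborSet (mk y) := by
            rw [← hy₂mk]; exact adj_mk y₂ u hyu
          rw [← h] at this; exact this
        obtain ⟨n, hn⟩ := adj_extract x u hq
        have := dist4' u n hyu hn
        subst this
        rw [one_smul] at hn
        exact hn
    by_cases hxy : x = y₂
    · rw [← hy₂mk, hxy]
    · exact absurd hset (hlink x y₂ hxy)
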